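/- For any finite Markov decision process (S, A, P, R, γ) and any stationary policy π : S → Δ(A), the value function and the π-bisimulation metric satisfy |V^π(s) − V^π(t)| ≤ d^π(s, t) for all states s, t ∈ S. -/
import Mathlib


/-- A probability distribution on a finite set, represented as a nonnegative
function summing to one. -/
def IsProb {X : Type*} [Fintype X] (μ : X → ℝ) : Prop :=
  (∀ x, 0 ≤ μ x) ∧ ∑ x, μ x = 1

/-- A coupling of `μ ∈ Δ(X)` and `ν ∈ Δ(Y)`: a probability distribution on
`X × Y` whose first marginal is `μ` and whose second marginal is `ν`. -/
def IsCoupling {X Y : Type*} [Fintype X] [Fintype Y]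
    (θ : X × Y → ℝ) (μ : X → ℝ) (ν : Y → ℝ) : Prop :=
  IsProb θ ∧ (∀ x, ∑ y, θ (x, y) = μ x) ∧ (∀ y, ∑ x, θ (x, y) = ν y)

/-- The 1-Wasserstein (optimal transport) cost between `μ ∈ Δ(X)` and `ν ∈ Δ(Y)`
with ground cost `d`. -/
noncomputable def Wass {X Y : Type*} [Fintype X] [Fintype Y]
    (d : X → Y → ℝ) (μ : X → ℝ) (ν : Y → ℝ) : ℝ :=
  sInf {c | ∃ θ : X × Y → ℝ, IsCoupling θ μ ν ∧ c = ∑ p : X × Y, θ p * d p.1 p.2}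

/-- `R^π_s = ∑ₐ π(a|s) R(s,a)`, the expected immediate reward of policy `π` at `s`. -/
def Rpi {S A : Type*} [Fintype A] (R : S → A → ℝ) (π : S → A → ℝ) (s : S) : ℝ :=
  ∑ a, π s a * R s a

/-- `P^π_s(s') = ∑ₐ π(a|s) P(s'|s,a)`, the state-transition kernel induced by `π`. -/
def Ppi {S A : Type*} [Fintype A] (P : S → A → S → ℝ) (π : S → A → ℝ) (s s' : S) : ℝ :=
  ∑ a, π s a * P s a s'

/-- The Bellman operator of policy `π`:
`(T V)(s) = R^π_s + γ ∑_{s'} P^π_s(s') V(s')`. -/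
def bellman {S A : Type*} [Fintype S] [Fintype A]
    (γ : ℝ) (R : S → A → ℝ) (P : S → A → S → ℝ) (π : S → A → ℝ)
    (V : S → ℝ) (s : S) : ℝ :=
  Rpi R π s + γ * ∑ s', Ppi P π s s' * V s'

/-- The π-bisimulation operator:
`F(d)(s,t) = |R^π_s − R^π_t| + γ W_d(P^π_s, P^π_t)`. -/
noncomputable def bisimF {S A : Type*} [Fintype S] [Fintype A]
    (γ : ℝ) (R : S → A → ℝ) (P : S → A → S → ℝ) (π : S → A → ℝ)
    (d : S → S → ℝ) (s t : S) : ℝ :=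
  |Rpi R π s - Rpi R π t| + γ * Wass d (Ppi P π s) (Ppi P π t)


lemma prod_coupling {X Y : Type*} [Fintype X] [Fintype Y]
    (μ : X → ℝ) (ν : Y → ℝ) (hμ : IsProb μ) (hν : IsProb ν) :
    IsCoupling (fun p => μ p.1 * ν p.2) μ ν := by
  refine ⟨⟨fun p => mul_nonneg (hμ.1 _) (hν.1 _), ?_⟩, fun x => ?_, fun y => ?_⟩
  · rw [Fintype.sum_prod_type]
    simp_rw [← Finset.mul_sum, hν.2, mul_one]
    exact hμ.2
  · simp_rw [← Finset.mul_sum, hν.2, mul_one]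
  · simp_rw [← Finset.sum_mul, hμ.2, one_mul]

lemma coupling_sum_split {X Y : Type*} [Fintype X] [Fintype Y]
    {θ : X × Y → ℝ} {μ : X → ℝ} {ν : Y → ℝ} (h : IsCoupling θ μ ν)
    (V : X → ℝ) (W : Y → ℝ) :
    ∑ x, μ x * V x - ∑ y, ν y * W y = ∑ p : X × Y, θ p * (V p.1 - W p.2) := by
  have h1 : ∑ p : X × Y, θ p * V p.1 = ∑ x, μ x * V x := by
    rw [Fintype.sum_prod_type]
    refine Finset.sum_congr rfl fun x _ => ?_
    simp only [← Finset.sum_mul, h.2.1 x]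
  have h2 : ∑ p : X × Y, θ p * W p.2 = ∑ y, ν y * W y := by
    rw [Fintype.sum_prod_type_right]
    refine Finset.sum_congr rfl fun y _ => ?_
    simp only [← Finset.sum_mul, h.2.2 y]
  simp_rw [mul_sub, Finset.sum_sub_distrib, h1, h2]

lemma isProb_Ppi {S A : Type*} [Fintype S] [Fintype A]
    (P : S → A → S → ℝ) (hP : ∀ s a, IsProb (P s a))
    (π : S → A → ℝ) (hπ : ∀ s, IsProb (π s)) (s : S) :
    IsProb (Ppi P π s) := by
  constructor
  · intro x
    exact Finset.sum_nonneg fun a _ => mul_nonneg ((hπ s).1 a) ((hP s a).1 x)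
  · unfold Ppi
    rw [Finset.sum_comm]
    simp_rw [← Finset.mul_sum]
    have h1 : ∀ a, ∑ x, P s a x = 1 := fun a => (hP s a).2
    simp [h1, (hπ s).2]

/-- for any finite MDP and stationary policy `π`, the value
function and the π-bisimulation metric satisfy `|V^π(s) − V^π(t)| ≤ d^π(s,t)`. -/
theorem abs_value_sub_le_bisim {S A : Type*} [Fintype S] [Fintype A]
    (γ : ℝ) (hγ0 : 0 < γ) (hγ1 : γ < 1)
    (P : S → A → S → ℝ) (hP : ∀ s a, IsProb (P s a))
    (R : S → A → ℝ) (hR : ∀ s a, 0 ≤ R s a ∧ R s a ≤ 1 - γ)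
    (π : S → A → ℝ) (hπ : ∀ s, IsProb (π s))
    -- `V` is the (unique) fixed point of the Bellman operator of `π`
    (V : S → ℝ) (hV : ∀ s, V s = bellman γ R P π V s)
    -- `dpi` is the (unique) fixed point of the π-bisimulation operator
    (dpi : S → S → ℝ) (hd0 : ∀ s t, 0 ≤ dpi s t)
    (hdfix : ∀ s t, dpi s t = bisimF γ R P π dpi s t) :
    ∀ s t, |V s - V t| ≤ dpi s t := by
  intro s0 t0
  have hne : (Finset.univ : Finset (S × S)).Nonempty := ⟨(s0, t0), Finset.mem_univ _⟩
  set f : S × S → ℝ := fun p => |V p.1 - V p.2| - dpi p.1 p.2 with hf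
  set M : ℝ := Finset.univ.sup' hne f with hM
  have key : ∀ s t : S, |V s - V t| - dpi s t ≤ γ * M := by
    intro s t
    have hμ := isProb_Ppi P hP π hπ s
    have hν := isProb_Ppi P hP π hπ t
    have hstep : |∑ x, Ppi P π s x * V x - ∑ y, Ppi P π t y * V y|
        ≤ Wass dpi (Ppi P π s) (Ppi P π t) + M := by
      have hlb : ∀ c ∈ {c | ∃ θ : S × S → ℝ, IsCoupling θ (Ppi P π s) (Ppi P π t) ∧
          c = ∑ p : S × S, θ p * dpi p.1 p.2},
          |∑ x, Ppi P π s x * V x - ∑ y, Ppi P π t y * V y| - M ≤ c := by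
        rintro c ⟨θ, hθ, rfl⟩
        have hsplit := coupling_sum_split hθ V V
        have habs : |∑ p : S × S, θ p * (V p.1 - V p.2)|
            ≤ ∑ p : S × S, θ p * (dpi p.1 p.2 + M) := by
          refine (Finset.abs_sum_le_sum_abs _ _).trans ?_
          refine Finset.sum_le_sum fun p _ => ?_
          rw [abs_mul, abs_of_nonneg (hθ.1.1 p)]
          refine mul_le_mul_of_nonneg_left ?_ (hθ.1.1 p)
          have hle : f p ≤ M := Finset.le_sup' f (Finset.mem_univ p)
          simp only [hf] at hle
          linarith
        have hsum : ∑ p : S × S, θ p * (dpi p.1 p.2 + M)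
            = (∑ p : S × S, θ p * dpi p.1 p.2) + M := by
          simp_rw [mul_add, Finset.sum_add_distrib, ← Finset.sum_mul, hθ.1.2, one_mul]
        rw [hsplit]
        linarith
      have hnonempty : Set.Nonempty {c | ∃ θ : S × S → ℝ,
          IsCoupling θ (Ppi P π s) (Ppi P π t) ∧ c = ∑ p : S × S, θ p * dpi p.1 p.2} :=
        ⟨_, fun p => Ppi P π s p.1 * Ppi P π t p.2, prod_coupling _ _ hμ hν, rfl⟩
      have := le_csInf hnonempty hlb
      unfold Wass
      linarith
    have hVs := hV s
    have hVt := hV t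
    unfold bellman at hVs hVt
    have hdf := hdfix s t
    unfold bisimF at hdf
    have habs2 : |V s - V t| ≤ |Rpi R π s - Rpi R π t|
        + γ * |∑ x, Ppi P π s x * V x - ∑ y, Ppi P π t y * V y| := by
      rw [hVs, hVt]
      have h1 : Rpi R π s + γ * ∑ s', Ppi P π s s' * V s'
          - (Rpi R π t + γ * ∑ s', Ppi P π t s' * V s')
          = (Rpi R π s - Rpi R π t)
          + γ * (∑ x, Ppi P π s x * V x - ∑ y, Ppi P π t y * V y) := by ring
      rw [h1]
      refine (abs_add_le _ _).trans ?_
      rw [abs_mul, abs_of_pos hγ0]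
    have : |V s - V t| ≤ dpi s t + γ * M := by
      rw [hdf]
      nlinarith [hstep, habs2]
    linarith
  have hMle : M ≤ γ * M := by
    refine Finset.sup'_le hne f fun p _ => ?_
    exact key p.1 p.2
  have hM0 : M ≤ 0 := by nlinarith
  have hfin : f (s0, t0) ≤ M := Finset.le_sup' f (Finset.mem_univ _)
  simp only [hf] at hfin
  linarith
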